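/- For every x ∈ L with ⟨x, E⟩ ≥ 0 for all 27 exceptional classes E, there exists w ∈ W_6 such that w(x) satisfies ⟨w(x), r_i⟩ ≥ 0 for all 0 ≤ i ≤ 5 and ⟨w(x), e_6⟩ ≥ 0. That is, every Weyl orbit of a class in the dual cone of the exceptional classes meets the fundamental domain A. -/
import Mathlib


/-- The intersection form on the divisor class lattice `L = Fin 7 → ℤ`:
`⟨x, y⟩ = x₀y₀ − x₁y₁ − ⋯ − x₆y₆`. -/
def form (x y : Fin 7 → ℤ) : ℤ :=
  x 0 * y 0 - x 1 * y 1 - x 2 * y 2 - x 3 * y 3 - x 4 * y 4 - x 5 * y 5 - x 6 * y 6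

/-- The standard basis vectors `e 0, …, e 6` of `L`. -/
def e (i : Fin 7) : Fin 7 → ℤ := fun j => if j = i then 1 else 0

/-- The anticanonical class `κ = 3e₀ − e₁ − ⋯ − e₆`. -/
def kappa : Fin 7 → ℤ := (3 : ℤ) • e 0 - e 1 - e 2 - e 3 - e 4 - e 5 - e 6

/-- The simple roots `r₀ = e₀ − e₁ − e₂ − e₃` and `rᵢ = eᵢ − e_{i+1}` for `1 ≤ i ≤ 5`. -/
def r : Fin 6 → (Fin 7 → ℤ) :=
  ![e 0 - e 1 - e 2 - e 3, e 1 - e 2, e 2 - e 3, e 3 - e 4, e 4 - e 5, e 5 - e 6]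

lemma form_add_left (x y v : Fin 7 → ℤ) : form (x + y) v = form x v + form y v := by
  simp only [form, Pi.add_apply]; ring

lemma form_smul_left (c : ℤ) (x v : Fin 7 → ℤ) : form (c • x) v = c * form x v := by
  simp only [form, Pi.smul_apply, smul_eq_mul]; ring

/-- The reflection `x ↦ x + ⟨x, v⟩·v` as a ℤ-linear map. -/
def reflMap (v : Fin 7 → ℤ) : (Fin 7 → ℤ) →ₗ[ℤ] (Fin 7 → ℤ) where
  toFun x := x + form x v • v
  map_add' x y := by
    funext j
    simp only [form, Pi.add_apply, Pi.smul_apply, smul_eq_mul]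
    ring
  map_smul' c x := by
    funext j
    simp only [form, Pi.add_apply, Pi.smul_apply, smul_eq_mul, RingHom.id_apply]
    ring

lemma reflMap_invol (v : Fin 7 → ℤ) (hv : form v v = -2) (x : Fin 7 → ℤ) :
    reflMap v (reflMap v x) = x := by
  show (x + form x v • v) + form (x + form x v • v) v • v = x
  rw [form_add_left, form_smul_left, hv]
  module

/-- The reflection `sᵢ(x) = x + ⟨x, rᵢ⟩·rᵢ` through the simple root `rᵢ`,
as a ℤ-linear automorphism of `L`. -/
def s (i : Fin 6) : (Fin 7 → ℤ) ≃ₗ[ℤ] (Fin 7 → ℤ) :=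
  LinearEquiv.ofLinear (reflMap (r i)) (reflMap (r i))
    (LinearMap.ext fun x => reflMap_invol (r i) (by fin_cases i <;> decide) x)
    (LinearMap.ext fun x => reflMap_invol (r i) (by fin_cases i <;> decide) x)

/-- The Weyl group `W₆`: the subgroup of the group of ℤ-linear automorphisms of `L`
generated by the reflections `s₀, …, s₅`. -/
def W6 : Subgroup ((Fin 7 → ℤ) ≃ₗ[ℤ] (Fin 7 → ℤ)) :=
  Subgroup.closure (Set.range s)

lemma form_symm (x y : Fin 7 → ℤ) : form x y = form y x := by
  simp only [form]; ring

lemma form_add_right (v x y : Fin 7 → ℤ) : form v (x + y) = form v x + form v y := by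
  simp only [form, Pi.add_apply]; ring

lemma form_smul_right (c : ℤ) (v x : Fin 7 → ℤ) : form v (c • x) = c * form v x := by
  simp only [form, Pi.smul_apply, smul_eq_mul]; ring

lemma s_apply (i : Fin 6) (y : Fin 7 → ℤ) : s i y = y + form y (r i) • r i := rfl

lemma r_norm (i : Fin 6) : form (r i) (r i) = -2 := by fin_cases i <;> decide

lemma s_invol (i : Fin 6) (y : Fin 7 → ℤ) : s i (s i y) = y :=
  reflMap_invol (r i) (r_norm i) y

lemma form_s_s (i : Fin 6) (a b : Fin 7 → ℤ) :
    form (s i a) (s i b) = form a b := by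
  rw [s_apply, s_apply, form_add_left, form_smul_left, form_add_right, form_smul_right,
    form_add_right, form_smul_right, r_norm, form_symm (r i) b]
  ring

lemma s_kappa (i : Fin 6) : s i kappa = kappa := by
  rw [s_apply]
  have : form kappa (r i) = 0 := by fin_cases i <;> decide
  rw [this]
  module

/-- The hypothesis (nonnegative pairing with all exceptional classes)
is preserved by the simple reflections. -/
lemma hyp_s (i : Fin 6) (y : Fin 7 → ℤ)
    (h : ∀ E : Fin 7 → ℤ, form E E = -1 → form E kappa = 1 → 0 ≤ form y E) :
    ∀ E : Fin 7 → ℤ, form E E = -1 → form E kappa = 1 → 0 ≤ form (s i y) E := by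
  intro E hE1 hE2
  have hE1' : form (s i E) (s i E) = -1 := by rw [form_s_s]; exact hE1
  have hE2' : form (s i E) kappa = 1 := by
    rw [← s_kappa i, form_s_s]; exact hE2
  have := h (s i E) hE1' hE2'
  calc (0:ℤ) ≤ form y (s i E) := this
    _ = form (s i y) (s i (s i E)) := (form_s_s i y (s i E)).symm
    _ = form (s i y) E := by rw [s_invol]

/-- The weight vector `ρ = e₁ + 2e₂ + ⋯ + 6e₆`. -/
def rho : Fin 7 → ℤ := ![0, 1, 2, 3, 4, 5, 6]

lemma rho_nonneg (y : Fin 7 → ℤ)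
    (h : ∀ E : Fin 7 → ℤ, form E E = -1 → form E kappa = 1 → 0 ≤ form y E) :
    0 ≤ form y rho := by
  have h1 := h (e 1) (by decide) (by decide)
  have h2 := h (e 2) (by decide) (by decide)
  have h3 := h (e 3) (by decide) (by decide)
  have h4 := h (e 4) (by decide) (by decide)
  have h5 := h (e 5) (by decide) (by decide)
  have h6 := h (e 6) (by decide) (by decide)
  simp only [form, e] at *
  simp (config := { decide := true }) only [if_true, if_false,
    show rho 0 = 0 from by decide, show rho 1 = 1 from by decide,
    show rho 2 = 2 from by decide, show rho 3 = 3 from by decide,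
    show rho 4 = 4 from by decide, show rho 5 = 5 from by decide,
    show rho 6 = 6 from by decide] at *
  linarith

lemma r_rho_pos (i : Fin 6) : 1 ≤ form (r i) rho := by
  fin_cases i <;> decide

lemma descent : ∀ n : ℕ, ∀ y : Fin 7 → ℤ,
    (∀ E : Fin 7 → ℤ, form E E = -1 → form E kappa = 1 → 0 ≤ form y E) →
    (form y rho).toNat < n →
    ∃ w ∈ W6, (∀ E : Fin 7 → ℤ, form E E = -1 → form E kappa = 1 → 0 ≤ form (w y) E) ∧
      ∀ i : Fin 6, 0 ≤ form (w y) (r i) := by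
  intro n
  induction n with
  | zero => intro y _ hlt; omega
  | succ n ih =>
    intro y hy hlt
    by_cases hcham : ∀ i : Fin 6, 0 ≤ form y (r i)
    · exact ⟨1, one_mem _, hy, hcham⟩
    · push_neg at hcham
      obtain ⟨i, hi⟩ := hcham
      set y' := s i y with hy'def
      have hy' : ∀ E : Fin 7 → ℤ, form E E = -1 → form E kappa = 1 → 0 ≤ form y' E :=
        hyp_s i y hy
      have hnn : 0 ≤ form y rho := rho_nonneg y hy
      have hnn' : 0 ≤ form y' rho := rho_nonneg y' hy'
      have hdec : form y' rho ≤ form y rho - 1 := by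
        have hexp : form y' rho = form y rho + form y (r i) * form (r i) rho := by
          rw [hy'def, s_apply, form_add_left, form_smul_left]
        have h1 : 1 ≤ form (r i) rho := r_rho_pos i
        nlinarith [hi, h1]
      have hlt' : (form y' rho).toNat < n := by omega
      obtain ⟨w', hw'mem, hw'hyp, hw'cham⟩ := ih y' hy' hlt'
      refine ⟨w' * s i, mul_mem hw'mem (Subgroup.subset_closure ⟨i, rfl⟩), ?_, ?_⟩
      · intro E h1 h2
        have : (w' * s i) y = w' y' := rfl
        rw [this]; exact hw'hyp E h1 h2
      · intro j
        have : (w' * s i) y = w' y' := rfl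
        rw [this]; exact hw'cham j

/-- Every Weyl orbit of a class in the dual cone of the exceptional classes
meets the fundamental domain `A`. -/
theorem statement_10 (x : Fin 7 → ℤ)
    (h : ∀ E : Fin 7 → ℤ, form E E = -1 → form E kappa = 1 → 0 ≤ form x E) :
    ∃ w ∈ W6, (∀ i : Fin 6, 0 ≤ form (w x) (r i)) ∧ 0 ≤ form (w x) (e 6) := by
  obtain ⟨w, hwmem, hwhyp, hwcham⟩ :=
    descent ((form x rho).toNat + 1) x h (Nat.lt_succ_self _)
  exact ⟨w, hwmem, hwcham, hwhyp (e 6) (by decide) (by decide)⟩
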